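/- arXiv:1008.3241 — 2 statements merged into one kernel-verified Lean document; each statement's English description precedes it below -/
import Mathlib

section
/- Let S be a semigroup satisfying conditions (A), (B), (C), and let Q be the semigroup of ~-classes of Σ. For all a, b ∈ S: if l(a) ≥ l(b) then [a,a][b,b] = [a,a], and if l(b) ≥ l(a) then [a,a][b,b] = [b,b]; in particular idempotents of Q commute, [a,a] = [b,b] whenever l(a) = l(b), and the idempotents of Q form an ω-chain: the map sending the idempotent [a,a] to l(a) ∈ ℕ is a well-defined bijection from the set of idempotents of Q onto ℕ that reverses the order e ≤ f ⟺ ef = fe = e. -/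
/-- The bicyclic semigroup `𝓑` carried by `ℕ × ℕ`, an element being `(r, l)`;
`(m,n)(p,q) = (m - n + t, q - p + t)` with `t = max n p`. -/
structure Bicyclic where
  r : ℕ
  l : ℕ

instance : Mul Bicyclic :=
  ⟨fun x y => ⟨x.r + (max x.l y.r - x.l), y.l + (max x.l y.r - y.r)⟩⟩

/-- The inverse `(m,n)⁻¹ = (n,m)` in the bicyclic semigroup. -/
def Bicyclic.inv (x : Bicyclic) : Bicyclic := ⟨x.l, x.r⟩

/-- `T` is a left I-order in the bicyclic semigroup `𝓑`. -/
def IsLeftIOrderBic (T : Set Bicyclic) : Prop :=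
  ∀ q : Bicyclic, ∃ a ∈ T, ∃ b ∈ T, q = a.inv * b

/-- `r a`, the first coordinate of `φ a` in `𝓑`. -/
def rr {S : Type*} [Mul S] (φ : S →ₙ* Bicyclic) (a : S) : ℕ := (φ a).r

/-- `l a`, the second coordinate of `φ a` in `𝓑`. -/
def ll {S : Type*} [Mul S] (φ : S →ₙ* Bicyclic) (a : S) : ℕ := (φ a).l

/-- Condition (A): the image of `φ` is a left I-order in `𝓑`. -/
def CondA {S : Type*} [Mul S] (φ : S →ₙ* Bicyclic) : Prop :=
  IsLeftIOrderBic (Set.range (⇑φ))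

/-- Condition (B)(i): if `l x, l y ≥ r a` and `x * a = y * a` then `x = y`. -/
def CondBi {S : Type*} [Mul S] (φ : S →ₙ* Bicyclic) : Prop :=
  ∀ x y a : S, rr φ a ≤ ll φ x → rr φ a ≤ ll φ y → x * a = y * a → x = y

/-- Condition (B)(ii): if `r x, r y ≥ l a` and `a * x = a * y` then `x = y`. -/
def CondBii {S : Type*} [Mul S] (φ : S →ₙ* Bicyclic) : Prop :=
  ∀ x y a : S, ll φ a ≤ rr φ x → ll φ a ≤ rr φ y → a * x = a * y → x = y

/-- Condition (C): for all `b c` there are `x y` with `x * b = y * c`,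
`r x = r y`, `l x = r b - l b + max (l b) (l c)` and
`l y = r c - l c + max (l b) (l c)`. -/
def CondC {S : Type*} [Mul S] (φ : S →ₙ* Bicyclic) : Prop :=
  ∀ b c : S, ∃ x y : S, x * b = y * c ∧ rr φ x = rr φ y ∧
    ll φ x = rr φ b + (max (ll φ b) (ll φ c) - ll φ b) ∧
    ll φ y = rr φ c + (max (ll φ b) (ll φ c) - ll φ c)

/-- `Σ = {(a,b) ∈ S × S : r a = r b}`. -/
abbrev Sig {S : Type*} [Mul S] (φ : S →ₙ* Bicyclic) : Type _ :=
  {p : S × S // rr φ p.1 = rr φ p.2}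

/-- The relation `∼` on pairs: `(a,b) ∼ (c,d)` iff there are `x y` with
`x * a = y * c`, `x * b = y * d`, `l x = r a`, `l y = r c`, `r x = r y`. -/
def simP {S : Type*} [Mul S] (φ : S →ₙ* Bicyclic) (p q : S × S) : Prop :=
  ∃ x y : S, x * p.1 = y * q.1 ∧ x * p.2 = y * q.2 ∧
    ll φ x = rr φ p.1 ∧ ll φ y = rr φ q.1 ∧ rr φ x = rr φ y

/-- The relation `∼` on `Σ`. -/
def sim {S : Type*} [Mul S] (φ : S →ₙ* Bicyclic) (p q : Sig φ) : Prop :=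
  simP φ p.1 q.1

theorem rr_mul {S : Type*} [Mul S] (φ : S →ₙ* Bicyclic) (x a : S) :
    rr φ (x * a) = rr φ x + (max (ll φ x) (rr φ a) - ll φ x) := by
  simp only [rr, ll, map_mul]; rfl

theorem rr_mul_eq {S : Type*} [Mul S] (φ : S →ₙ* Bicyclic) {x a : S}
    (h : rr φ a ≤ ll φ x) : rr φ (x * a) = rr φ x := by
  have h1 := rr_mul φ x a
  have h2 : max (ll φ x) (rr φ a) = ll φ x := max_eq_left h
  omega

theorem sig_mul_ok {S : Type*} [Mul S] (φ : S →ₙ* Bicyclic) {a b c d x y : S}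
    (hab : rr φ a = rr φ b) (hcd : rr φ c = rr φ d)
    (hx : ll φ x = rr φ b + (max (ll φ b) (ll φ c) - ll φ b))
    (hy : ll φ y = rr φ c + (max (ll φ b) (ll φ c) - ll φ c))
    (hr : rr φ x = rr φ y) : rr φ (x * a) = rr φ (y * d) := by
  have h1 := rr_mul_eq φ (x := x) (a := a)
    (by have := le_max_left (ll φ b) (ll φ c); omega)
  have h2 := rr_mul_eq φ (x := y) (a := d)
    (by have := le_max_right (ll φ b) (ll φ c); omega)
  omega

/-- The set `Q` of `∼`-classes of `Σ`. -/
def QT {S : Type*} [Mul S] (φ : S →ₙ* Bicyclic) : Type _ := Quot (sim φ)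

/-- The `∼`-class `[a,b]` of an element of `Σ`. -/
def cls {S : Type*} [Mul S] (φ : S →ₙ* Bicyclic) (p : Sig φ) : QT φ :=
  Quot.mk _ p

/-- Packaging `(a, b)` with `r a = r b` as an element of `Σ`. -/
def mkSig {S : Type*} [Mul S] (φ : S →ₙ* Bicyclic) (a b : S)
    (h : rr φ a = rr φ b) : Sig φ := ⟨(a, b), h⟩

/-- A chosen witness `x` from condition (C) applied to `b, c`. -/
noncomputable def cx {S : Type*} [Mul S] {φ : S →ₙ* Bicyclic} (hC : CondC φ)
    (b c : S) : S := (hC b c).choose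

/-- A chosen witness `y` from condition (C) applied to `b, c`. -/
noncomputable def cy {S : Type*} [Mul S] {φ : S →ₙ* Bicyclic} (hC : CondC φ)
    (b c : S) : S := (hC b c).choose_spec.choose

theorem c_spec {S : Type*} [Mul S] {φ : S →ₙ* Bicyclic} (hC : CondC φ) (b c : S) :
    cx hC b c * b = cy hC b c * c ∧ rr φ (cx hC b c) = rr φ (cy hC b c) ∧
    ll φ (cx hC b c) = rr φ b + (max (ll φ b) (ll φ c) - ll φ b) ∧
    ll φ (cy hC b c) = rr φ c + (max (ll φ b) (ll φ c) - ll φ c) :=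
  (hC b c).choose_spec.choose_spec

/-- Representative-level multiplication: `(a,b) · (c,d) = (x * a, y * d)` where
`x, y` are the witnesses from condition (C) for `b, c`. -/
noncomputable def pairMul {S : Type*} [Mul S] {φ : S →ₙ* Bicyclic} (hC : CondC φ)
    (p q : Sig φ) : Sig φ :=
  ⟨(cx hC p.1.2 q.1.1 * p.1.1, cy hC p.1.2 q.1.1 * q.1.2),
    sig_mul_ok φ p.2 q.2 (c_spec hC p.1.2 q.1.1).2.2.1
      (c_spec hC p.1.2 q.1.1).2.2.2 (c_spec hC p.1.2 q.1.1).2.1⟩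

/-- The multiplication `[a,b][c,d] = [x*a, y*d]` on the set `Q` of `∼`-classes. -/
noncomputable def qmul {S : Type*} [Mul S] {φ : S →ₙ* Bicyclic} (hC : CondC φ)
    (u v : QT φ) : QT φ :=
  cls φ (pairMul hC (Quot.out u) (Quot.out v))

theorem ll_cx_self {S : Type*} [Mul S] {φ : S →ₙ* Bicyclic} (hC : CondC φ)
    (a : S) : ll φ (cx hC a a) = rr φ a := by
  have h := (c_spec hC a a).2.2.1
  have h2 : max (ll φ a) (ll φ a) = ll φ a := max_self _
  omega

/-- The embedding `θ : S → Q`, `a θ = [x, x*a]` for a chosen `x` with `l x = r a`. -/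
noncomputable def theta {S : Type*} [Mul S] {φ : S →ₙ* Bicyclic} (hC : CondC φ)
    (a : S) : QT φ :=
  cls φ ⟨(cx hC a a, cx hC a a * a), (rr_mul_eq φ (ll_cx_self hC a).ge).symm⟩

/-- The inverse `[a,b]⁻¹ = [b,a]` on `Q`. -/
noncomputable def qinv {S : Type*} [Mul S] {φ : S →ₙ* Bicyclic} (u : QT φ) :
    QT φ :=
  cls φ ⟨((Quot.out u).1.2, (Quot.out u).1.1), (Quot.out u).2.symm⟩

section Aux

variable {S : Type*} [Semigroup S] {φ : S →ₙ* Bicyclic}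

theorem ll_mul (φ : S →ₙ* Bicyclic) (x a : S) :
    ll φ (x * a) = ll φ a + (max (ll φ x) (rr φ a) - rr φ a) := by
  simp only [rr, ll, map_mul]; rfl

theorem ll_mul_eq (φ : S →ₙ* Bicyclic) {x a : S} (h : rr φ a ≤ ll φ x) :
    ll φ (x * a) = ll φ a + (ll φ x - rr φ a) := by
  have h1 := ll_mul φ x a
  have h2 : max (ll φ x) (rr φ a) = ll φ x := max_eq_left h
  omega

theorem ll_triv (φ : S →ₙ* Bicyclic) {x a : S} (h : ll φ x = rr φ a) :
    ll φ (x * a) = ll φ a := by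
  have h1 := ll_mul_eq φ h.ge
  omega

theorem existsL (hA : CondA φ) (n : ℕ) : ∃ a : S, ll φ a = n := by
  obtain ⟨pa, ⟨a, rfl⟩, pb, ⟨b, rfl⟩, h⟩ := hA ⟨n, n⟩
  have h1 : n = (φ a).l + (max (φ a).r (φ b).r - (φ a).r) := congrArg Bicyclic.r h
  have h2 : n = (φ b).l + (max (φ a).r (φ b).r - (φ b).r) := congrArg Bicyclic.l h
  have ha : ll φ a = (φ a).l := rfl
  have hb : ll φ b = (φ b).l := rfl
  rcases le_total (φ b).r (φ a).r with hle | hle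
  · have := max_eq_left hle; exact ⟨a, by omega⟩
  · have := max_eq_right hle; exact ⟨b, by omega⟩

theorem simP_ll {a b c d : S} (hab : rr φ a = rr φ b) (hcd : rr φ c = rr φ d)
    (h : simP φ (a, b) (c, d)) : ll φ a = ll φ c ∧ ll φ b = ll φ d := by
  obtain ⟨x, y, h1, h2, hx, hy, hr⟩ := h
  have e1 : ll φ (x * a) = ll φ a := ll_triv φ hx
  have e2 : ll φ (y * c) = ll φ c := ll_triv φ hy
  have e3 : ll φ (x * b) = ll φ b := ll_triv φ (hx.trans hab)
  have e4 : ll φ (y * d) = ll φ d := ll_triv φ (hy.trans hcd)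
  rw [h1] at e1; rw [h2] at e3
  exact ⟨e1.symm.trans e2, e3.symm.trans e4⟩

theorem sim_refl (hC : CondC φ) (p : Sig φ) : sim φ p p :=
  ⟨cx hC p.1.1 p.1.1, cx hC p.1.1 p.1.1, rfl, rfl, ll_cx_self hC _, ll_cx_self hC _, rfl⟩

theorem sim_symm {p q : Sig φ} (h : sim φ p q) : sim φ q p := by
  obtain ⟨x, y, h1, h2, hx, hy, hr⟩ := h
  exact ⟨y, x, h1.symm, h2.symm, hy, hx, hr.symm⟩

theorem sim_trans (hC : CondC φ) {p q r : Sig φ} (h1 : sim φ p q) (h2 : sim φ q r) :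
    sim φ p r := by
  obtain ⟨x, y, hxa, hxb, hx, hy, hxy⟩ := h1
  obtain ⟨u, v, huc, hud, hu, hv, huv⟩ := h2
  obtain ⟨hzw, hrzw, hlz, hlw⟩ := c_spec hC y u
  set z := cx hC y u with hz
  set w := cy hC y u with hw
  have hyu : ll φ y = ll φ u := hy.trans hu.symm
  have hlz' : ll φ z = rr φ y := by rw [hyu, max_self] at hlz; omega
  have hlw' : ll φ w = rr φ u := by rw [hyu, max_self] at hlw; omega
  refine ⟨z * x, w * v, ?_, ?_, ?_, ?_, ?_⟩
  · calc (z * x) * p.1.1 = z * (x * p.1.1) := mul_assoc _ _ _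
      _ = (z * y) * q.1.1 := by rw [hxa, mul_assoc]
      _ = w * (u * q.1.1) := by rw [hzw, mul_assoc]
      _ = (w * v) * r.1.1 := by rw [huc, mul_assoc]
  · calc (z * x) * p.1.2 = z * (x * p.1.2) := mul_assoc _ _ _
      _ = (z * y) * q.1.2 := by rw [hxb, mul_assoc]
      _ = w * (u * q.1.2) := by rw [hzw, mul_assoc]
      _ = (w * v) * r.1.2 := by rw [hud, mul_assoc]
  · rw [ll_triv φ (hlz'.trans hxy.symm)]; exact hx
  · rw [ll_triv φ (hlw'.trans huv)]; exact hv
  · rw [rr_mul_eq φ (hlz'.trans hxy.symm).ge, rr_mul_eq φ (hlw'.trans huv).ge]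
    exact hrzw

theorem sim_equiv (hC : CondC φ) : Equivalence (sim φ) :=
  ⟨sim_refl hC, sim_symm, sim_trans hC⟩

theorem cls_eq_iff (hC : CondC φ) {p q : Sig φ} : cls φ p = cls φ q ↔ sim φ p q := by
  unfold cls
  exact Quot.eq.trans (Equivalence.eqvGen_iff (sim_equiv hC))

theorem diagSim (hC : CondC φ) {e f : S} (h : ll φ e = ll φ f) : simP φ (e, e) (f, f) := by
  obtain ⟨heq, hr, hx, hy⟩ := c_spec hC e f
  rw [h, max_self] at hx hy
  exact ⟨cx hC e f, cy hC e f, heq, heq, show ll φ (cx hC e f) = rr φ e by omega,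
    show ll φ (cy hC e f) = rr φ f by omega, hr⟩

theorem simToProper {A B c : S} (h : simP φ (A, B) (c, c)) :
    ∃ W : S, ll φ W = rr φ A ∧ W * A = W * B := by
  obtain ⟨x, y, h1, h2, hx, _, _⟩ := h
  exact ⟨x, hx, h1.trans h2.symm⟩

theorem properToDiag (hA : CondA φ) {A B W : S} (hAB : rr φ A = rr φ B)
    (hW : ll φ W = rr φ A) (hWe : W * A = W * B) :
    ∃ e : S, simP φ (A, B) (e, e) ∧ ll φ e = ll φ A := by
  obtain ⟨y', hy'⟩ := existsL hA (rr φ W)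
  refine ⟨W * A, ⟨y' * W, y', mul_assoc _ _ _, ?_, ?_, ?_, ?_⟩, ll_triv φ hW⟩
  · rw [mul_assoc, ← hWe]
  · rw [ll_triv φ hy']; exact hW
  · rw [rr_mul_eq φ hW.ge]; exact hy'
  · exact rr_mul_eq φ hy'.ge

theorem prodProper (hC : CondC φ) {a b c d s t : S}
    (hab : rr φ a = rr φ b) (hcd : rr φ c = rr φ d)
    (hs : ll φ s = rr φ a) (hsab : s * a = s * b)
    (ht : ll φ t = rr φ c) (htcd : t * c = t * d) :
    ∃ W : S, ll φ W = rr φ (cx hC b c * a) ∧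
      W * (cx hC b c * a) = W * (cy hC b c * d) := by
  obtain ⟨hXY, hrXY, hlX, hlY⟩ := c_spec hC b c
  set X := cx hC b c with hX
  set Y := cy hC b c with hY
  have hmb := le_max_left (ll φ b) (ll φ c)
  have hmc := le_max_right (ll φ b) (ll φ c)
  have hbX : rr φ b ≤ ll φ X := by omega
  have hcY : rr φ c ≤ ll φ Y := by omega
  obtain ⟨hz12, hrz12, hlz1, hlz2⟩ := c_spec hC X s
  set z1 := cx hC X s with hz1d
  set z2 := cy hC X s with hz2d
  have hsX : ll φ s ≤ ll φ X := by omega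
  have hlz1' : ll φ z1 = rr φ X := by
    have := max_eq_left hsX; omega
  obtain ⟨hz34, hrz34, hlz3, hlz4⟩ := c_spec hC Y t
  set z3 := cx hC Y t with hz3d
  set z4 := cy hC Y t with hz4d
  have htY : ll φ t ≤ ll φ Y := by omega
  have hlz3' : ll φ z3 = rr φ Y := by
    have := max_eq_left htY; omega
  obtain ⟨hg12, hrg12, hlg1, hlg2⟩ := c_spec hC z1 z3
  set g1 := cx hC z1 z3 with hg1d
  set g2 := cy hC z1 z3 with hg2d
  have hz13 : ll φ z1 = ll φ z3 := by omega
  have hlg1' : ll φ g1 = rr φ z1 := by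
    rw [hz13, max_self] at hlg1; omega
  have e1 : z1 * (X * a) = z1 * (Y * c) := by
    calc z1 * (X * a) = (z1 * X) * a := (mul_assoc _ _ _).symm
      _ = (z2 * s) * a := by rw [hz12]
      _ = z2 * (s * b) := by rw [mul_assoc, hsab]
      _ = (z1 * X) * b := by rw [← mul_assoc, ← hz12]
      _ = z1 * (Y * c) := by rw [mul_assoc, hXY]
  have e2 : z3 * (Y * c) = z3 * (Y * d) := by
    calc z3 * (Y * c) = (z4 * t) * c := by rw [← mul_assoc, hz34]
      _ = z4 * (t * d) := by rw [mul_assoc, htcd]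
      _ = z3 * (Y * d) := by rw [← mul_assoc, ← hz34, mul_assoc]
  refine ⟨g1 * z1, ?_, ?_⟩
  · have h1 : ll φ (g1 * z1) = ll φ z1 := ll_triv φ hlg1'
    have h2 : rr φ (X * a) = rr φ X := rr_mul_eq φ (by omega)
    omega
  · calc (g1 * z1) * (X * a) = g1 * (z1 * (X * a)) := mul_assoc _ _ _
      _ = g1 * (z1 * (Y * c)) := by rw [e1]
      _ = (g2 * z3) * (Y * c) := by rw [← mul_assoc, hg12]
      _ = g2 * (z3 * (Y * d)) := by rw [mul_assoc, e2]
      _ = (g1 * z1) * (Y * d) := by rw [← mul_assoc, ← hg12]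

end Aux

section Aux2

variable {S : Type*} [Semigroup S] {φ : S →ₙ* Bicyclic}

theorem idemPair (hA : CondA φ) (hBi : CondBi φ) (hC : CondC φ) {a b : S}
    (hab : rr φ a = rr φ b)
    (hsim : simP φ (cx hC b a * a, cy hC b a * b) (a, b)) :
    ∃ e : S, simP φ (a, b) (e, e) := by
  obtain ⟨hXY, hrXY, hlX, hlY⟩ := c_spec hC b a
  set X := cx hC b a with hXd
  set Y := cy hC b a with hYd
  have hmb := le_max_left (ll φ b) (ll φ a)
  have hma := le_max_right (ll φ b) (ll φ a)
  have haX : rr φ a ≤ ll φ X := by omega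
  have haY : rr φ a ≤ ll φ Y := by omega
  obtain ⟨z, w, h1, h2, hz, hw, hzw⟩ := hsim
  have h1' : z * (X * a) = w * a := h1
  have h2' : z * (Y * b) = w * b := h2
  have hz' : ll φ z = rr φ (X * a) := hz
  have hw' : ll φ w = rr φ a := hw
  have hrXa : rr φ (X * a) = rr φ X := rr_mul_eq φ haX
  have hrYb : rr φ (Y * b) = rr φ Y := rr_mul_eq φ (by omega)
  have i1 : ll φ (X * a) = ll φ a := by
    have t1 : ll φ (z * (X * a)) = ll φ (X * a) := ll_triv φ hz'
    have t2 : ll φ (w * a) = ll φ a := ll_triv φ hw'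
    rw [h1'] at t1; omega
  have i2 : ll φ (Y * b) = ll φ b := by
    have t1 : ll φ (z * (Y * b)) = ll φ (Y * b) := ll_triv φ (by omega)
    have t2 : ll φ (w * b) = ll φ b := ll_triv φ (hw'.trans hab)
    rw [h2'] at t1; omega
  have j1 : ll φ (X * a) = ll φ a + (ll φ X - rr φ a) := ll_mul_eq φ haX
  have j2 : ll φ (Y * b) = ll φ b + (ll φ Y - rr φ b) := ll_mul_eq φ (by omega)
  have hXa' : ll φ X = rr φ a := by omega
  have hYa' : ll φ Y = rr φ a := by omega
  have c1 : z * X = w := by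
    refine hBi (z * X) w a ?_ ?_ ?_
    · rw [ll_triv φ (by omega : ll φ z = rr φ X)]; omega
    · omega
    · rw [mul_assoc]; exact h1'
  have c2 : z * Y = w := by
    refine hBi (z * Y) w b ?_ ?_ ?_
    · rw [ll_triv φ (by omega : ll φ z = rr φ Y)]; omega
    · omega
    · rw [mul_assoc]; exact h2'
  have key : w * a = w * b := by
    calc w * a = (z * Y) * a := by rw [c2]
      _ = z * (X * b) := by rw [mul_assoc, ← hXY]
      _ = (z * X) * b := by rw [← mul_assoc]
      _ = w * b := by rw [c1]
  obtain ⟨e, he, -⟩ := properToDiag hA hab hw' key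
  exact ⟨e, he⟩

theorem idemDiag (hA : CondA φ) (hBi : CondBi φ) (hC : CondC φ) {u : QT φ}
    (hu : qmul hC u u = u) : ∃ e : S, u = cls φ (mkSig φ e e rfl) := by
  have hout : cls φ (Quot.out u) = u := Quot.out_eq u
  have hmk : cls φ (pairMul hC (Quot.out u) (Quot.out u)) = cls φ (Quot.out u) := by
    rw [hout]; exact hu
  have hsim : sim φ (pairMul hC (Quot.out u) (Quot.out u)) (Quot.out u) :=
    (cls_eq_iff hC).1 hmk
  set p := Quot.out u with hpd
  have hsim' : simP φ (cx hC p.1.2 p.1.1 * p.1.1, cy hC p.1.2 p.1.1 * p.1.2)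
      (p.1.1, p.1.2) := hsim
  obtain ⟨e, he⟩ := idemPair hA hBi hC p.2 hsim'
  refine ⟨e, ?_⟩
  rw [← hout]
  exact (cls_eq_iff hC).2 he

theorem qmul_diag (hA : CondA φ) (hC : CondC φ) (a b : S) :
    ∃ e : S, qmul hC (cls φ (mkSig φ a a rfl)) (cls φ (mkSig φ b b rfl)) =
      cls φ (mkSig φ e e rfl) ∧ ll φ e = max (ll φ a) (ll φ b) := by
  have hpu : sim φ (Quot.out (cls φ (mkSig φ a a rfl))) (mkSig φ a a rfl) :=
    (cls_eq_iff hC).1 (Quot.out_eq _)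
  have hqv : sim φ (Quot.out (cls φ (mkSig φ b b rfl))) (mkSig φ b b rfl) :=
    (cls_eq_iff hC).1 (Quot.out_eq _)
  set p := Quot.out (cls φ (mkSig φ a a rfl)) with hpd
  set q := Quot.out (cls φ (mkSig φ b b rfl)) with hqd
  have hpu' : simP φ (p.1.1, p.1.2) (a, a) := hpu
  have hqv' : simP φ (q.1.1, q.1.2) (b, b) := hqv
  have hp2 : rr φ p.1.1 = rr φ p.1.2 := p.2
  have hq2 : rr φ q.1.1 = rr φ q.1.2 := q.2
  have hpl := simP_ll hp2 rfl hpu'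
  have hql := simP_ll hq2 rfl hqv'
  obtain ⟨s, hs, hsab⟩ := simToProper hpu'
  obtain ⟨t, ht, htcd⟩ := simToProper hqv'
  obtain ⟨W, hW, hWe⟩ := prodProper hC hp2 hq2 hs hsab ht htcd
  obtain ⟨e, he, hle⟩ := properToDiag hA
    (show rr φ (cx hC p.1.2 q.1.1 * p.1.1) = rr φ (cy hC p.1.2 q.1.1 * q.1.2) from
      (pairMul hC p q).2) hW hWe
  refine ⟨e, ?_, ?_⟩
  · show cls φ (pairMul hC p q) = cls φ (mkSig φ e e rfl)
    exact (cls_eq_iff hC).2 he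
  · have hlX := (c_spec hC p.1.2 q.1.1).2.2.1
    have hm1 := le_max_left (ll φ p.1.2) (ll φ q.1.1)
    have hj : ll φ (cx hC p.1.2 q.1.1 * p.1.1) =
        ll φ p.1.1 + (ll φ (cx hC p.1.2 q.1.1) - rr φ p.1.1) :=
      ll_mul_eq φ (by omega)
    have h1 := hpl.1
    have h2 := hpl.2
    have h3 := hql.1
    rw [h2, h3] at hlX
    omega

end Aux2

/-- `[a,a][b,b] = [a,a]` if `l a ≥ l b` and `= [b,b]` if `l b ≥ l a`; idempotents
of `Q` commute, `[a,a] = [b,b]` when `l a = l b`, and the idempotents of `Q` form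
an ω-chain: `[a,a] ↦ l a` extends to an order-reversing bijection between the
idempotents of `Q` and `ℕ`. -/
theorem stmt17 {S : Type*} [Semigroup S] (φ : S →ₙ* Bicyclic)
    (hA : CondA φ) (hBi : CondBi φ) (hBii : CondBii φ) (hC : CondC φ) :
    (∀ a b : S, ll φ b ≤ ll φ a →
      qmul hC (cls φ (mkSig φ a a rfl)) (cls φ (mkSig φ b b rfl)) =
        cls φ (mkSig φ a a rfl)) ∧
    (∀ a b : S, ll φ a ≤ ll φ b →
      qmul hC (cls φ (mkSig φ a a rfl)) (cls φ (mkSig φ b b rfl)) =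
        cls φ (mkSig φ b b rfl)) ∧
    (∀ u v : QT φ, qmul hC u u = u → qmul hC v v = v →
      qmul hC u v = qmul hC v u) ∧
    (∀ a b : S, ll φ a = ll φ b →
      cls φ (mkSig φ a a rfl) = cls φ (mkSig φ b b rfl)) ∧
    (∃ F : QT φ → ℕ,
      (∀ a : S, F (cls φ (mkSig φ a a rfl)) = ll φ a) ∧
      (∀ u v : QT φ, qmul hC u u = u → qmul hC v v = v →
        (F u = F v → u = v) ∧
        ((qmul hC u v = u ∧ qmul hC v u = u) ↔ F v ≤ F u)) ∧
      (∀ n : ℕ, ∃ u : QT φ, qmul hC u u = u ∧ F u = n)) := by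
  have part1 : ∀ a b : S, ll φ b ≤ ll φ a →
      qmul hC (cls φ (mkSig φ a a rfl)) (cls φ (mkSig φ b b rfl)) =
        cls φ (mkSig φ a a rfl) := by
    intro a b h
    obtain ⟨e, he, hle⟩ := qmul_diag hA hC a b
    rw [he]
    exact (cls_eq_iff hC).2 (diagSim hC (by omega))
  have part2 : ∀ a b : S, ll φ a ≤ ll φ b →
      qmul hC (cls φ (mkSig φ a a rfl)) (cls φ (mkSig φ b b rfl)) =
        cls φ (mkSig φ b b rfl) := by
    intro a b h
    obtain ⟨e, he, hle⟩ := qmul_diag hA hC a b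
    rw [he]
    exact (cls_eq_iff hC).2 (diagSim hC (by omega))
  refine ⟨part1, part2, ?_, ?_, ?_⟩
  · intro u v hu hv
    obtain ⟨e, rfl⟩ := idemDiag hA hBi hC hu
    obtain ⟨f, rfl⟩ := idemDiag hA hBi hC hv
    rcases le_total (ll φ e) (ll φ f) with h | h
    · rw [part2 e f h, part1 f e h]
    · rw [part1 e f h, part2 f e h]
  · intro a b h
    exact (cls_eq_iff hC).2 (diagSim hC h)
  · refine ⟨Quot.lift (fun p : Sig φ => ll φ p.1.2)
      (fun p q h => (simP_ll p.2 q.2 h).2), fun a => rfl, ?_, ?_⟩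
    · intro u v hu hv
      obtain ⟨e, rfl⟩ := idemDiag hA hBi hC hu
      obtain ⟨f, rfl⟩ := idemDiag hA hBi hC hv
      constructor
      · intro hF
        exact (cls_eq_iff hC).2 (diagSim hC hF)
      · constructor
        · rintro ⟨h1, h2⟩
          rcases le_total (ll φ f) (ll φ e) with h | h
          · exact h
          · rw [part2 e f h] at h1
            have := (simP_ll rfl rfl ((cls_eq_iff hC).1 h1)).1
            exact this.le
        · intro h
          exact ⟨part1 e f h, part2 f e h⟩
    · intro n
      obtain ⟨a, ha⟩ := existsL hA n
      exact ⟨cls φ (mkSig φ a a rfl), part1 a a le_rfl, ha⟩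
end

section
/- Let S be a semigroup satisfying conditions (A), (B), (C), let Q be the semigroup of ~-classes of Σ (an inverse semigroup with [a,b]⁻¹ = [b,a]), and let θ: S → Q be the embedding aθ = [x, xa] for any x ∈ S with l(x) = r(a). Then every element of Q can be written as (aθ)⁻¹(bθ) for some a, b ∈ S; indeed [a,b] = (aθ)⁻¹(bθ) for every [a,b] ∈ Q, so θ(S) is a left I-order in Q. -/
section Aux

variable {S : Type*} [Semigroup S] {φ : S →ₙ* Bicyclic}

theorem simP_refl (hC : CondC φ) (p : S × S) : simP φ p p :=
  ⟨cx hC p.1 p.1, cx hC p.1 p.1, rfl, rfl, ll_cx_self hC p.1, ll_cx_self hC p.1, rfl⟩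

theorem simP_symm {p q : S × S} (h : simP φ p q) : simP φ q p := by
  obtain ⟨x, y, h1, h2, h3, h4, h5⟩ := h
  exact ⟨y, x, h1.symm, h2.symm, h4, h3, h5.symm⟩

theorem simP_trans (hC : CondC φ) {p q r : S × S}
    (h1 : simP φ p q) (h2 : simP φ q r) : simP φ p r := by
  obtain ⟨x, y, hx1, hx2, hlx, hly, hrxy⟩ := h1
  obtain ⟨u, v, hu1, hu2, hlu, hlv, hruv⟩ := h2
  obtain ⟨hst, hrst, hls, hlt⟩ := c_spec hC y u
  set s := cx hC y u
  set t := cy hC y u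
  clear_value s t
  have eq1 : ∀ g g' g'' : S, x * g = y * g' → u * g' = v * g'' →
      (s * x) * g = (t * v) * g'' := by
    intro g g' g'' e1 e2
    calc (s * x) * g = s * (x * g) := by simp only [mul_assoc]
      _ = s * (y * g') := by rw [e1]
      _ = (s * y) * g' := by simp only [mul_assoc]
      _ = (t * u) * g' := by rw [hst]
      _ = t * (u * g') := by simp only [mul_assoc]
      _ = t * (v * g'') := by rw [e2]
      _ = (t * v) * g'' := by simp only [mul_assoc]
  have a1 := ll_mul φ s x
  have a2 := ll_mul φ t v
  have a3 := rr_mul φ s x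
  have a4 := rr_mul φ t v
  exact ⟨s * x, t * v, eq1 _ _ _ hx1 hu1, eq1 _ _ _ hx2 hu2,
    by (try dsimp only); omega, by (try dsimp only); omega, by (try dsimp only); omega⟩

theorem sim_equivalence (hC : CondC φ) : Equivalence (sim (S := S) φ) :=
  ⟨sim_refl hC, sim_symm, sim_trans hC⟩

theorem sim_out (hC : CondC φ) (p : Sig φ) :
    sim φ (Quot.out (cls φ p)) p :=
  (cls_eq_iff hC).mp (Quot.out_eq (cls φ p))

theorem sim_swap {p q : Sig φ} (h : sim φ p q) :
    sim φ ⟨(p.1.2, p.1.1), p.2.symm⟩ ⟨(q.1.2, q.1.1), q.2.symm⟩ := by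
  obtain ⟨x, y, h1, h2, h3, h4, h5⟩ := h
  exact ⟨x, y, h2, h1, p.2 ▸ h3, q.2 ▸ h4, h5⟩

theorem natL1 {ra rb ra' rb' lb lb' lc ls lt rs rt lx lx' rx lu lv lv' ru rv lβ lβu rxa : ℕ}
    (hab : ra = rb) (hab' : ra' = rb') (hls : ls = ra) (hlt : lt = ra') (hrst : rs = rt)
    (hlb : lb = lb')
    (hlx : lx = rb + (max lb lc - lb)) (hlx' : lx' = rb' + (max lb' lc - lb'))
    (hlu : lu = rx + (max lx ls - lx)) (hlv : lv = rs + (max lx ls - ls))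
    (hlv' : lv' = rt + (max lx' lt - lt)) (hruv : ru = rv)
    (hlβ : lβ = rv + (max lv lv' - lv))
    (hβu : lβu = lu + (max lβ ru - ru))
    (hxa : rxa = rx + (max lx ra - lx)) : lβu = rxa := by omega

theorem natL3 {ra rb ra' rb' lb lb' lc ls lt rs rt lx lx' lv lv' ru rv ru' rv' lβ lγ rβ rγ rβu rγu : ℕ}
    (hab : ra = rb) (hab' : ra' = rb') (hls : ls = ra) (hlt : lt = ra') (hrst : rs = rt)
    (hlb : lb = lb')
    (hlx : lx = rb + (max lb lc - lb)) (hlx' : lx' = rb' + (max lb' lc - lb'))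
    (hlv : lv = rs + (max lx ls - ls)) (hlv' : lv' = rt + (max lx' lt - lt))
    (hruv : ru = rv) (hruv' : ru' = rv')
    (hlβ : lβ = rv + (max lv lv' - lv)) (hlγ : lγ = rv' + (max lv lv' - lv'))
    (hrβγ : rβ = rγ)
    (hβur : rβu = rβ + (max lβ ru - lβ)) (hγur : rγu = rγ + (max lγ ru' - lγ)) :
    rβu = rγu := by omega

theorem natL4 {rc lb lc ly lβu ry lwy : ℕ}
    (hly : ly = rc + (max lb lc - lc)) (hwy : lwy = ly + (max lβu ry - ry)) :
    rc ≤ lwy := by omega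

theorem natR1 {ra rb rc rc' lb lc lc' ls lt rs rt lx ly ly' rx ry lu lv lv' ru rv lβ lβu rxa : ℕ}
    (hab : ra = rb) (hls : ls = rc) (hlt : lt = rc') (hrst : rs = rt) (hlc : lc = lc')
    (hly : ly = rc + (max lb lc - lc)) (hly' : ly' = rc' + (max lb lc' - lc'))
    (hrxy : rx = ry)
    (hlu : lu = ry + (max ly ls - ly)) (hlv : lv = rs + (max ly ls - ls))
    (hlv' : lv' = rt + (max ly' lt - lt)) (hruv : ru = rv)
    (hlβ : lβ = rv + (max lv lv' - lv))
    (hβu : lβu = lu + (max lβ ru - ru))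
    (hlx : lx = rb + (max lb lc - lb))
    (hxa : rxa = rx + (max lx ra - lx)) : lβu = rxa := by omega

theorem natR3 {rc rc' lb lc lc' ls lt rs rt ly ly' lv lv' ru rv ru' rv' lβ lγ rβ rγ rβu rγu : ℕ}
    (hls : ls = rc) (hlt : lt = rc') (hrst : rs = rt) (hlc : lc = lc')
    (hly : ly = rc + (max lb lc - lc)) (hly' : ly' = rc' + (max lb lc' - lc'))
    (hlv : lv = rs + (max ly ls - ls)) (hlv' : lv' = rt + (max ly' lt - lt))
    (hruv : ru = rv) (hruv' : ru' = rv')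
    (hlβ : lβ = rv + (max lv lv' - lv)) (hlγ : lγ = rv' + (max lv lv' - lv'))
    (hrβγ : rβ = rγ)
    (hβur : rβu = rβ + (max lβ ru - lβ)) (hγur : rγu = rγ + (max lγ ru' - lγ)) :
    rβu = rγu := by omega

theorem natR4 {rb lb lc lx lβu rx lwx : ℕ}
    (hlx : lx = rb + (max lb lc - lb)) (hwx : lwx = lx + (max lβu rx - rx)) :
    rb ≤ lwx := by omega

theorem natK1 {ra rb lxa lxb lX rxa rX rxaa rXaa lw rXxa : ℕ}
    (hab : ra = rb) (hlxa : lxa = ra) (hlxb : lxb = rb)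
    (hlX : lX = rxa + (max lxa lxb - lxa))
    (hxaa : rxaa = rxa + (max lxa ra - lxa))
    (hXaa : rXaa = rX + (max lX rxaa - lX))
    (hrXxa : rXxa = rX + (max lX rxa - lX))
    (hlw : lw = rXxa) : lw = rXaa := by omega

theorem natK2 {ra rb lxa lxb lX rxa lXxa lw rXxa rX lwP : ℕ}
    (hab : ra = rb) (hlxa : lxa = ra) (hlxb : lxb = rb)
    (hlX : lX = rxa + (max lxa lxb - lxa))
    (hlXxa : lXxa = lxa + (max lX rxa - rxa))
    (hrXxa : rXxa = rX + (max lX rxa - lX))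
    (hlw : lw = rXxa)
    (hlwP : lwP = lXxa + (max lw rXxa - rXxa)) : lwP = ra := by omega

theorem natK3 {lw rXxa rw rwP : ℕ}
    (hlw : lw = rXxa)
    (hrwP : rwP = rw + (max lw rXxa - lw)) : rw = rwP := by omega

theorem sim_pairMul_left (hBi : CondBi φ) (hC : CondC φ) {p p' : Sig φ} (q : Sig φ)
    (h : sim φ p p') : sim φ (pairMul hC p q) (pairMul hC p' q) := by
  obtain ⟨⟨a, b⟩, hab⟩ := p
  obtain ⟨⟨a', b'⟩, hab'⟩ := p'
  obtain ⟨⟨c, d⟩, hcd⟩ := q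
  obtain ⟨s, t, hs1, hs2, hls, hlt, hrst⟩ := h
  dsimp only at hs1 hs2 hls hlt hab hab' hcd
  show simP φ (cx hC b c * a, cy hC b c * d) (cx hC b' c * a', cy hC b' c * d)
  obtain ⟨hxy, hrxy, hlx, hly⟩ := c_spec hC b c
  obtain ⟨hxy', hrxy', hlx', hly'⟩ := c_spec hC b' c
  set x := cx hC b c
  set y := cy hC b c
  set x' := cx hC b' c
  set y' := cy hC b' c
  have hlb : ll φ b = ll φ b' := by
    have e := congrArg (ll φ) hs2
    rw [ll_mul φ s b, ll_mul φ t b'] at e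
    omega
  obtain ⟨huv, hruv, hlu, hlv⟩ := c_spec hC x s
  obtain ⟨huv', hruv', hlu', hlv'⟩ := c_spec hC x' t
  set u := cx hC x s
  set v := cy hC x s
  set u' := cx hC x' t
  set v' := cy hC x' t
  obtain ⟨hβγ, hrβγ, hlβ, hlγ⟩ := c_spec hC v v'
  set β := cx hC v v'
  set γ := cy hC v v'
  clear_value x y x' y' u v u' v' β γ
  have key : ∀ g g' : S, s * g = t * g' →
      (β * u) * (x * g) = (γ * u') * (x' * g') := by
    intro g g' hg
    calc (β * u) * (x * g) = (β * (u * x)) * g := by simp only [mul_assoc]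
      _ = (β * (v * s)) * g := by rw [huv]
      _ = (β * v) * (s * g) := by simp only [mul_assoc]
      _ = (γ * v') * (t * g') := by rw [hβγ, hg]
      _ = (γ * (v' * t)) * g' := by simp only [mul_assoc]
      _ = (γ * (u' * x')) * g' := by rw [← huv']
      _ = (γ * u') * (x' * g') := by simp only [mul_assoc]
  have hβu_ll := ll_mul φ β u
  have hβu_rr := rr_mul φ β u
  have hγu_ll := ll_mul φ γ u'
  have hγu_rr := rr_mul φ γ u'
  have hxa_rr := rr_mul φ x a
  have hx'a_rr := rr_mul φ x' a'
  have hwy_ll := ll_mul φ (β * u) y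
  have hzy_ll := ll_mul φ (γ * u') y'
  have n1 : ll φ (β * u) = rr φ (x * a) :=
    natL1 hab hab' hls hlt hrst hlb hlx hlx' hlu hlv hlv' hruv hlβ hβu_ll hxa_rr
  have n2 : ll φ (γ * u') = rr φ (x' * a') :=
    natL1 hab' hab hlt hls hrst.symm hlb.symm hlx' hlx hlu' hlv' hlv hruv'
      (by rw [max_comm]; exact hlγ) hγu_ll hx'a_rr
  have n3 : rr φ (β * u) = rr φ (γ * u') :=
    natL3 hab hab' hls hlt hrst hlb hlx hlx' hlv hlv' hruv hruv' hlβ hlγ hrβγ hβu_rr hγu_rr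
  have hwz : (β * u) * y = (γ * u') * y' := by
    apply hBi _ _ c (natL4 hly hwy_ll) (natL4 hly' hzy_ll)
    calc ((β * u) * y) * c = (β * u) * (y * c) := by simp only [mul_assoc]
      _ = (β * u) * (x * b) := by rw [hxy]
      _ = (γ * u') * (x' * b') := key b b' hs2
      _ = (γ * u') * (y' * c) := by rw [hxy']
      _ = ((γ * u') * y') * c := by simp only [mul_assoc]
  have eq2 : (β * u) * (y * d) = (γ * u') * (y' * d) := by
    calc (β * u) * (y * d) = ((β * u) * y) * d := by simp only [mul_assoc]
      _ = ((γ * u') * y') * d := by rw [hwz]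
      _ = (γ * u') * (y' * d) := by simp only [mul_assoc]
  exact ⟨β * u, γ * u', key a a' hs1, eq2, n1, n2, n3⟩

theorem sim_pairMul_right (hBi : CondBi φ) (hC : CondC φ) (p : Sig φ) {q q' : Sig φ}
    (h : sim φ q q') : sim φ (pairMul hC p q) (pairMul hC p q') := by
  obtain ⟨⟨a, b⟩, hab⟩ := p
  obtain ⟨⟨c, d⟩, hcd⟩ := q
  obtain ⟨⟨c', d'⟩, hcd'⟩ := q'
  obtain ⟨s, t, hs1, hs2, hls, hlt, hrst⟩ := h
  dsimp only at hs1 hs2 hls hlt hab hcd hcd'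
  show simP φ (cx hC b c * a, cy hC b c * d) (cx hC b c' * a, cy hC b c' * d')
  obtain ⟨hxy, hrxy, hlx, hly⟩ := c_spec hC b c
  obtain ⟨hxy', hrxy', hlx', hly'⟩ := c_spec hC b c'
  set x := cx hC b c
  set y := cy hC b c
  set x' := cx hC b c'
  set y' := cy hC b c'
  have hlc : ll φ c = ll φ c' := by
    have e := congrArg (ll φ) hs1
    rw [ll_mul φ s c, ll_mul φ t c'] at e
    omega
  obtain ⟨huv, hruv, hlu, hlv⟩ := c_spec hC y s
  obtain ⟨huv', hruv', hlu', hlv'⟩ := c_spec hC y' t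
  set u := cx hC y s
  set v := cy hC y s
  set u' := cx hC y' t
  set v' := cy hC y' t
  obtain ⟨hβγ, hrβγ, hlβ, hlγ⟩ := c_spec hC v v'
  set β := cx hC v v'
  set γ := cy hC v v'
  clear_value x y x' y' u v u' v' β γ
  have key : ∀ g g' : S, s * g = t * g' →
      (β * u) * (y * g) = (γ * u') * (y' * g') := by
    intro g g' hg
    calc (β * u) * (y * g) = (β * (u * y)) * g := by simp only [mul_assoc]
      _ = (β * (v * s)) * g := by rw [huv]
      _ = (β * v) * (s * g) := by simp only [mul_assoc]
      _ = (γ * v') * (t * g') := by rw [hβγ, hg]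
      _ = (γ * (v' * t)) * g' := by simp only [mul_assoc]
      _ = (γ * (u' * y')) * g' := by rw [← huv']
      _ = (γ * u') * (y' * g') := by simp only [mul_assoc]
  have hβu_ll := ll_mul φ β u
  have hβu_rr := rr_mul φ β u
  have hγu_ll := ll_mul φ γ u'
  have hγu_rr := rr_mul φ γ u'
  have hxa_rr := rr_mul φ x a
  have hx'a_rr := rr_mul φ x' a
  have hwx_ll := ll_mul φ (β * u) x
  have hzx_ll := ll_mul φ (γ * u') x'
  have n1 : ll φ (β * u) = rr φ (x * a) :=
    natR1 hab hls hlt hrst hlc hly hly' hrxy hlu hlv hlv' hruv hlβ hβu_ll hlx hxa_rr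
  have n2 : ll φ (γ * u') = rr φ (x' * a) :=
    natR1 hab hlt hls hrst.symm hlc.symm hly' hly hrxy' hlu' hlv' hlv hruv'
      (by rw [max_comm]; exact hlγ) hγu_ll hlx' hx'a_rr
  have n3 : rr φ (β * u) = rr φ (γ * u') :=
    natR3 hls hlt hrst hlc hly hly' hlv hlv' hruv hruv' hlβ hlγ hrβγ hβu_rr hγu_rr
  have hwz : (β * u) * x = (γ * u') * x' := by
    apply hBi _ _ b (natR4 hlx hwx_ll) (natR4 hlx' hzx_ll)
    calc ((β * u) * x) * b = (β * u) * (x * b) := by simp only [mul_assoc]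
      _ = (β * u) * (y * c) := by rw [← hxy]
      _ = (γ * u') * (y' * c') := key c c' hs1
      _ = (γ * u') * (x' * b) := by rw [← hxy']
      _ = ((γ * u') * x') * b := by simp only [mul_assoc]
  have eq1 : (β * u) * (x * a) = (γ * u') * (x' * a) := by
    calc (β * u) * (x * a) = ((β * u) * x) * a := by simp only [mul_assoc]
      _ = ((γ * u') * x') * a := by rw [hwz]
      _ = (γ * u') * (x' * a) := by simp only [mul_assoc]
  exact ⟨β * u, γ * u', eq1, key d d' hs2, n1, n2, n3⟩

theorem key_sim (hC : CondC φ) (a b : S) (hab : rr φ a = rr φ b) :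
    sim φ (pairMul hC ⟨(cx hC a a * a, cx hC a a), rr_mul_eq φ (ll_cx_self hC a).ge⟩
        ⟨(cx hC b b, cx hC b b * b), (rr_mul_eq φ (ll_cx_self hC b).ge).symm⟩)
      ⟨(a, b), hab⟩ := by
  have hlxa := ll_cx_self hC a
  have hlxb := ll_cx_self hC b
  set xa := cx hC a a
  set xb := cx hC b b
  show simP φ (cx hC xa xb * (xa * a), cy hC xa xb * (xb * b)) (a, b)
  obtain ⟨hXY, hrXY, hlX, hlY⟩ := c_spec hC xa xb
  set X := cx hC xa xb
  set Y := cy hC xa xb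
  have hlw := ll_cx_self hC (X * xa)
  set w := cx hC (X * xa) (X * xa)
  clear_value xa xb X Y w
  have hlXxa := ll_mul φ X xa
  have hrXxa := rr_mul φ X xa
  have hlwP := ll_mul φ w (X * xa)
  have hrwP := rr_mul φ w (X * xa)
  have hXaa_rr := rr_mul φ X (xa * a)
  have hxaa_rr := rr_mul φ xa a
  have n1 : ll φ w = rr φ (X * (xa * a)) :=
    natK1 hab hlxa hlxb hlX hxaa_rr hXaa_rr hrXxa hlw
  have n2 : ll φ (w * (X * xa)) = rr φ a :=
    natK2 hab hlxa hlxb hlX hlXxa hrXxa hlw hlwP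
  have n3 : rr φ w = rr φ (w * (X * xa)) :=
    natK3 hlw hrwP
  refine ⟨w, w * (X * xa), ?_, ?_, n1, n2, n3⟩
  · simp only [mul_assoc]
  · calc w * (Y * (xb * b)) = (w * (Y * xb)) * b := by simp only [mul_assoc]
      _ = (w * (X * xa)) * b := by rw [← hXY]

end Aux

/-- Every element of `Q` is `(a θ)⁻¹ (b θ)`; indeed `[a,b] = (a θ)⁻¹ (b θ)`,
so `θ(S)` is a left I-order in `Q`. -/
theorem stmt19 {S : Type*} [Semigroup S] (φ : S →ₙ* Bicyclic)
    (hA : CondA φ) (hBi : CondBi φ) (hBii : CondBii φ) (hC : CondC φ) :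
    (∀ p : Sig φ,
      cls φ p = qmul hC (qinv (theta hC p.1.1)) (theta hC p.1.2)) ∧
    (∀ u : QT φ, ∃ a b : S,
      u = qmul hC (qinv (theta hC a)) (theta hC b)) := by
  have main : ∀ p : Sig φ,
      cls φ p = qmul hC (qinv (theta hC p.1.1)) (theta hC p.1.2) := by
    intro p
    obtain ⟨⟨a, b⟩, hab⟩ := p
    have ha : rr φ (cx hC a a * a) = rr φ (cx hC a a) :=
      rr_mul_eq φ (ll_cx_self hC a).ge
    set Ta : Sig φ := ⟨(cx hC a a, cx hC a a * a), ha.symm⟩ with hTa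
    set Tb : Sig φ := ⟨(cx hC b b, cx hC b b * b),
      (rr_mul_eq φ (ll_cx_self hC b).ge).symm⟩ with hTb
    set Ta' : Sig φ := ⟨(cx hC a a * a, cx hC a a), ha⟩ with hTa'
    -- out (qinv (theta a)) ∼ Ta'
    have h1 : sim φ (Quot.out (qinv (theta hC a))) Ta' := by
      have h2 : sim φ (Quot.out (theta hC a)) Ta := sim_out hC Ta
      have h3 := sim_swap h2
      exact sim_trans hC
        (sim_out hC ⟨((Quot.out (theta hC a)).1.2, (Quot.out (theta hC a)).1.1),
          (Quot.out (theta hC a)).2.symm⟩) h3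
    have h4 : sim φ (Quot.out (theta hC b)) Tb := sim_out hC Tb
    have h5 : sim φ (pairMul hC (Quot.out (qinv (theta hC a))) (Quot.out (theta hC b)))
        (pairMul hC Ta' Tb) :=
      sim_trans hC (sim_pairMul_left hBi hC _ h1) (sim_pairMul_right hBi hC _ h4)
    have h6 : sim φ (pairMul hC Ta' Tb) ⟨(a, b), hab⟩ := key_sim hC a b hab
    have h7 : qmul hC (qinv (theta hC a)) (theta hC b)
        = cls φ (pairMul hC (Quot.out (qinv (theta hC a))) (Quot.out (theta hC b))) := rfl
    rw [h7, cls_eq_iff hC]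
    exact sim_symm (sim_trans hC h5 h6)
  refine ⟨main, ?_⟩
  intro u
  refine ⟨(Quot.out u).1.1, (Quot.out u).1.2, ?_⟩
  conv_lhs => rw [← Quot.out_eq u]
  exact main (Quot.out u)
end
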